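/- Fix k ≥ 0, m ≥ 1 and rates λ_1,...,λ_m > 0. Suppose for each j ∈ {k+1,...,k+m} the identity E[e^{-αW_j}] = β(α)^{j-1} Π_{i=0}^{j-k-1} λ_{m-i}/(λ_{m-i}-α) - Σ_{h=k+1}^{j} ϱ_h β(α)^{j-h} (α/(λ_{m-h+k+1}-α)) Π_{w=0}^{j-1-h} λ_{m+k-h-w}/(λ_{m+k-h-w}-α) holds in a neighborhood of α=0, where β(α)=E[e^{-αB}], E[B] < ∞, and ϱ_h = P(W_h = 0). Then E[W_j] = (j-1)E[B] - Σ_{i=0}^{j-k-1} 1/λ_{m-i} + Σ_{h=k+1}^{j} ϱ_h/λ_{m-h+k+1}. -/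

import Mathlib

open MeasureTheory Set Filter

lemma laplace_slope_tendsto {Ω : Type*} [MeasurableSpace Ω] (P : Measure Ω)
    [IsProbabilityMeasure P] (X : Ω → ℝ) (hX : Measurable X) (h0 : ∀ ω, 0 ≤ X ω)
    (hint : Integrable X P) :
    Tendsto (fun α : ℝ => ((∫ ω, Real.exp (-α * X ω) ∂P) - 1) / α) (nhdsWithin 0 (Ioi 0))
      (nhds (-∫ ω, X ω ∂P)) := by
  have key : Tendsto (fun α : ℝ => ∫ ω, (Real.exp (-α * X ω) - 1) / α ∂P)
      (nhdsWithin 0 (Ioi 0)) (nhds (∫ ω, -X ω ∂P)) := by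
    apply tendsto_integral_filter_of_dominated_convergence X
    · filter_upwards with α
      exact (((hX.const_mul (-α)).exp.sub measurable_const).div_const α).aestronglyMeasurable
    · filter_upwards [self_mem_nhdsWithin] with α (hα : 0 < α)
      filter_upwards with ω
      have hx := h0 ω
      have h1 : Real.exp (-α * X ω) ≤ 1 := by
        rw [Real.exp_le_one_iff]
        nlinarith
      have h2 : 1 - α * X ω ≤ Real.exp (-α * X ω) := by
        have := Real.add_one_le_exp (-α * X ω)
        linarith
      rw [Real.norm_eq_abs, abs_div, abs_of_pos hα, div_le_iff₀ hα,
        abs_of_nonpos (by linarith)]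
      nlinarith
    · exact hint
    · filter_upwards with ω
      have hd : HasDerivAt (fun α : ℝ => Real.exp (-α * X ω)) (-X ω) 0 := by
        have : HasDerivAt (fun α : ℝ => -α * X ω) (-X ω) 0 := by
          simpa using ((hasDerivAt_id (0:ℝ)).neg.mul_const (X ω))
        simpa using this.exp
      have h1 := hasDerivAt_iff_tendsto_slope.mp hd
      have h2 := h1.mono_left (nhdsWithin_mono 0
        (by intro x hx; exact ne_of_gt hx : Ioi (0:ℝ) ⊆ {0}ᶜ))
      refine h2.congr (fun α => ?_)
      simp [slope_def_field]
  have hneg : (∫ ω, -X ω ∂P) = -∫ ω, X ω ∂P := integral_neg X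
  rw [hneg] at key
  refine key.congr' ?_
  filter_upwards [self_mem_nhdsWithin] with α (hα : 0 < α)
  have hi : Integrable (fun ω => Real.exp (-α * X ω)) P := by
    apply Integrable.mono' (integrable_const 1)
    · exact ((hX.const_mul (-α)).exp).aestronglyMeasurable
    · filter_upwards with ω
      rw [Real.norm_eq_abs, abs_of_pos (Real.exp_pos _), Real.exp_le_one_iff]
      nlinarith [h0 ω]
  rw [integral_div, integral_sub hi (integrable_const 1)]
  simp

lemma prod_hasDerivAt {ι : Type*} (s : Finset ι) (f : ι → ℝ → ℝ) (d : ι → ℝ)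
    (h : ∀ i ∈ s, HasDerivAt (f i) (d i) 0) (h1 : ∀ i ∈ s, f i 0 = 1) :
    HasDerivAt (fun α => ∏ i ∈ s, f i α) (∑ i ∈ s, d i) 0 := by
  induction s using Finset.cons_induction with
  | empty => simpa using hasDerivAt_const (0:ℝ) (1:ℝ)
  | cons a s ha ih =>
    simp only [Finset.prod_cons, Finset.sum_cons]
    have hp := ih (fun i hi => h i (Finset.mem_cons_of_mem hi))
      (fun i hi => h1 i (Finset.mem_cons_of_mem hi))
    have := (h a (Finset.mem_cons_self a s)).mul hp
    refine this.congr_deriv ?_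
    rw [Finset.prod_eq_one (fun i hi => h1 i (Finset.mem_cons_of_mem hi)),
      h1 a (Finset.mem_cons_self a s)]
    ring

lemma hasDerivAt_frac (c : ℝ) (hc : c ≠ 0) :
    HasDerivAt (fun α : ℝ => c / (c - α)) (1 / c) 0 := by
  have := (hasDerivAt_const (0:ℝ) c).div
    ((hasDerivAt_const (0:ℝ) c).sub (hasDerivAt_id 0)) (by simpa)
  refine this.congr_deriv ?_
  simp
  field_simp

lemma hasDerivAt_frac2 (c : ℝ) (hc : c ≠ 0) :
    HasDerivAt (fun α : ℝ => α / (c - α)) (1 / c) 0 := by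
  have := (hasDerivAt_id (0:ℝ)).div
    ((hasDerivAt_const (0:ℝ) c).sub (hasDerivAt_id 0)) (by simpa)
  refine this.congr_deriv ?_
  simp
  field_simp

theorem mean_waiting_time {Ω : Type*} [MeasurableSpace Ω] (P : Measure Ω)
    [IsProbabilityMeasure P] (k m : ℕ) (hm : 1 ≤ m)
    (lam : ℕ → ℝ) (hlam : ∀ j ∈ Finset.Icc 1 m, 0 < lam j)
    (B : Ω → ℝ) (hB : Measurable B) (hBpos : ∀ ω, 0 ≤ B ω) (hBint : Integrable B P)
    (W : ℕ → Ω → ℝ) (hW : ∀ j, Measurable (W j)) (hWpos : ∀ j ω, 0 ≤ W j ω)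
    (hWint : ∀ j, Integrable (W j) P)
    (β : ℝ → ℝ) (hβ : ∀ α : ℝ, β α = ∫ ω, Real.exp (-α * B ω) ∂P)
    (ϱ : ℕ → ℝ) (hϱ : ∀ h, ϱ h = (P {ω | W h ω = 0}).toReal)
    (htrans : ∃ ε > (0 : ℝ), ∀ α : ℝ, 0 ≤ α → α < ε →
      ∀ j, k + 1 ≤ j → j ≤ k + m →
        ∫ ω, Real.exp (-α * W j ω) ∂P
          = β α ^ (j - 1) * (∏ i ∈ Finset.range (j - k), lam (m - i) / (lam (m - i) - α))
            - ∑ h ∈ Finset.Icc (k + 1) j, ϱ h * β α ^ (j - h) *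
                (α / (lam (m + k + 1 - h) - α)) *
                ∏ w ∈ Finset.range (j - h), lam (m + k - h - w) / (lam (m + k - h - w) - α)) :
    ∀ j, k + 1 ≤ j → j ≤ k + m →
      ∫ ω, W j ω ∂P
        = ((j : ℝ) - 1) * (∫ ω, B ω ∂P)
          - ∑ i ∈ Finset.range (j - k), 1 / lam (m - i)
          + ∑ h ∈ Finset.Icc (k + 1) j, ϱ h / lam (m + k + 1 - h) := by
  intro j hj1 hj2
  obtain ⟨ε, hε, htr⟩ := htrans
  have hβ0 : β 0 = 1 := by simp [hβ]
  set EB := ∫ ω, B ω ∂P with hEB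
  -- positivity facts
  have hpos1 : ∀ i ∈ Finset.range (j - k), lam (m - i) ≠ 0 := by
    intro i hi
    have := Finset.mem_range.mp hi
    exact ne_of_gt (hlam _ (Finset.mem_Icc.mpr ⟨by omega, by omega⟩))
  have hposc : ∀ h ∈ Finset.Icc (k + 1) j, lam (m + k + 1 - h) ≠ 0 := by
    intro h hh
    have := Finset.mem_Icc.mp hh
    exact ne_of_gt (hlam _ (Finset.mem_Icc.mpr ⟨by omega, by omega⟩))
  have hpos2 : ∀ h ∈ Finset.Icc (k + 1) j, ∀ w ∈ Finset.range (j - h),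
      lam (m + k - h - w) ≠ 0 := by
    intro h hh w hw
    have h1 := Finset.mem_Icc.mp hh
    have h2 := Finset.mem_range.mp hw
    exact ne_of_gt (hlam _ (Finset.mem_Icc.mpr ⟨by omega, by omega⟩))
  -- derivative of β within Ici 0
  have hEBslope : Tendsto (fun α : ℝ => (β α - 1) / α) (nhdsWithin 0 (Ioi 0))
      (nhds (-EB)) := by
    have := laplace_slope_tendsto P B hB hBpos hBint
    refine this.congr (fun α => ?_)
    rw [hβ]
  have hβd : HasDerivWithinAt β (-EB) (Ici 0) 0 := by
    rw [hasDerivWithinAt_iff_tendsto_slope, Ici_sdiff_left]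
    refine hEBslope.congr (fun α => ?_)
    simp [slope_def_field, hβ0]
  -- derivative of the first part G
  have hGd : HasDerivWithinAt
      (fun α : ℝ => β α ^ (j - 1) *
        (∏ i ∈ Finset.range (j - k), lam (m - i) / (lam (m - i) - α)))
      (((j : ℝ) - 1) * (-EB) + ∑ i ∈ Finset.range (j - k), 1 / lam (m - i))
      (Ici 0) 0 := by
    have hprod := prod_hasDerivAt (Finset.range (j - k))
      (fun i => fun α => lam (m - i) / (lam (m - i) - α))
      (fun i => 1 / lam (m - i))
      (fun i hi => hasDerivAt_frac _ (hpos1 i hi))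
      (fun i hi => by simp [div_self (hpos1 i hi)])
    have hmain := (hβd.pow (j - 1)).mul hprod.hasDerivWithinAt
    refine hmain.congr_deriv ?_
    simp only [Pi.pow_apply]
    have h1 : (∏ i ∈ Finset.range (j - k), lam (m - i) / (lam (m - i) - (0:ℝ))) = 1 :=
      Finset.prod_eq_one fun i hi => by rw [sub_zero, div_self (hpos1 i hi)]
    rw [hβ0, h1, Nat.cast_sub (by omega : 1 ≤ j), Nat.cast_one]
    ring
  -- derivative of each summand
  have hterm : ∀ h ∈ Finset.Icc (k + 1) j, HasDerivWithinAt
      (fun α : ℝ => ϱ h * β α ^ (j - h) * (α / (lam (m + k + 1 - h) - α)) *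
        ∏ w ∈ Finset.range (j - h), lam (m + k - h - w) / (lam (m + k - h - w) - α))
      (ϱ h / lam (m + k + 1 - h)) (Ici 0) 0 := by
    intro h hh
    have hc := hposc h hh
    have hprod := prod_hasDerivAt (Finset.range (j - h))
      (fun w => fun α => lam (m + k - h - w) / (lam (m + k - h - w) - α))
      (fun w => 1 / lam (m + k - h - w))
      (fun w hw => hasDerivAt_frac _ (hpos2 h hh w hw))
      (fun w hw => by simp [div_self (hpos2 h hh w hw)])
    have h1 := ((hβd.pow (j - h)).const_mul (ϱ h)).mul
      (hasDerivAt_frac2 _ hc).hasDerivWithinAt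
    have hmain := h1.mul hprod.hasDerivWithinAt
    refine hmain.congr_deriv ?_
    simp only [Pi.pow_apply, Pi.mul_apply]
    have hp1 : (∏ w ∈ Finset.range (j - h),
        lam (m + k - h - w) / (lam (m + k - h - w) - (0:ℝ))) = 1 :=
      Finset.prod_eq_one fun w hw => by rw [sub_zero, div_self (hpos2 h hh w hw)]
    rw [hβ0, hp1]
    simp
    ring
  have hSd : HasDerivWithinAt
      (fun α : ℝ => ∑ h ∈ Finset.Icc (k + 1) j,
        ϱ h * β α ^ (j - h) * (α / (lam (m + k + 1 - h) - α)) *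
        ∏ w ∈ Finset.range (j - h), lam (m + k - h - w) / (lam (m + k - h - w) - α))
      (∑ h ∈ Finset.Icc (k + 1) j, ϱ h / lam (m + k + 1 - h)) (Ici 0) 0 :=
    HasDerivWithinAt.fun_sum hterm
  have hHd := hGd.sub hSd
  -- value at 0 of H
  have hH0 : (β (0:ℝ) ^ (j - 1) *
      (∏ i ∈ Finset.range (j - k), lam (m - i) / (lam (m - i) - (0:ℝ)))
      - ∑ h ∈ Finset.Icc (k + 1) j, ϱ h * β (0:ℝ) ^ (j - h) *
          ((0:ℝ) / (lam (m + k + 1 - h) - 0)) *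
          ∏ w ∈ Finset.range (j - h),
            lam (m + k - h - w) / (lam (m + k - h - w) - (0:ℝ))) = 1 := by
    have h1 : (∏ i ∈ Finset.range (j - k), lam (m - i) / (lam (m - i) - (0:ℝ))) = 1 :=
      Finset.prod_eq_one fun i hi => by rw [sub_zero, div_self (hpos1 i hi)]
    rw [hβ0, h1]
    simp
  -- slope of H tends to the derivative
  have hHslope := hasDerivWithinAt_iff_tendsto_slope.mp hHd
  rw [Ici_sdiff_left] at hHslope
  -- slope of the Laplace transform of W j
  have hWslope := laplace_slope_tendsto P (W j) (hW j) (hWpos j) (hWint j)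
  -- they agree eventually
  have hmem : Ioo (0:ℝ) ε ∈ nhdsWithin (0:ℝ) (Ioi 0) :=
    Ioo_mem_nhdsGT_of_mem ⟨le_refl 0, hε⟩
  have hcongr : Tendsto (fun α : ℝ => ((∫ ω, Real.exp (-α * W j ω) ∂P) - 1) / α)
      (nhdsWithin 0 (Ioi 0))
      (nhds ((((j : ℝ) - 1) * (-EB) + ∑ i ∈ Finset.range (j - k), 1 / lam (m - i))
        - ∑ h ∈ Finset.Icc (k + 1) j, ϱ h / lam (m + k + 1 - h))) := by
    refine hHslope.congr' ?_
    filter_upwards [hmem] with α hα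
    rw [slope_def_field, htr α hα.1.le hα.2 j hj1 hj2]
    simp only [Pi.sub_apply]
    rw [hH0, sub_zero]
  have huniq := tendsto_nhds_unique hWslope hcongr
  have : ∫ ω, W j ω ∂P =
      -((((j : ℝ) - 1) * (-EB) + ∑ i ∈ Finset.range (j - k), 1 / lam (m - i))
        - ∑ h ∈ Finset.Icc (k + 1) j, ϱ h / lam (m + k + 1 - h)) := by linarith
  rw [this]
  ring
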